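/- Let f : ℝ^d → ℝ be differentiable, let α, γ > 0, λ ≥ 0, and let x, m ∈ ℝ^d. Let k ∈ ℝ^d be any vector satisfying the coordinatewise sign condition k_i m_i ≥ 0 for all i (as holds for k = ∇K(m) when K is convex with sgn(∇K(m)) = sgn(m)). Write s := 𝕀(m ⊙ x ≤ 0). Then ⟨α∇f(x) − λ s ⊙ m, k − λ s ⊙ x⟩ + ⟨k − λ s ⊙ x, −α∇f(x) − γm⟩ = −⟨λ s + γ·1, k ⊙ m⟩ − λ(λ + γ)‖(−m ⊙ x)^+‖₁ ≤ 0. In particular, H(x, m) = α f(x) + K(m) + λ‖(−m ⊙ x)^+‖₁ is a Lyapunov function for the continuous-time Lion-K dynamics with cautious weight decay: ẋ = ∇K(m) − λ𝕀(m ⊙ x ≤ 0) ⊙ x, ṁ = −α∇f(x) − γm. -/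
import Mathlib


/-- Lyapunov derivative identity for the continuous-time Lion-K dynamics
with cautious weight decay: with `s = 𝕀(m ⊙ x ≤ 0)` and any `k` with `kᵢmᵢ ≥ 0`
(e.g. `k = ∇K(m)`), the derivative of `H(x,m) = α f(x) + K(m) + λ‖(-m ⊙ x)⁺‖₁` equals
`-⟨λ s + γ·1, k ⊙ m⟩ - λ(λ+γ)‖(-m ⊙ x)⁺‖₁ ≤ 0`. -/
theorem lionk_cwd_lyapunov_derivative {d : ℕ} (f : (Fin d → ℝ) → ℝ)
    (grad : (Fin d → ℝ) → Fin d → ℝ)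
    (hgrad : ∀ p, HasFDerivAt f
      (∑ i, grad p i • (ContinuousLinearMap.proj i : (Fin d → ℝ) →L[ℝ] ℝ)) p)
    (α γ lam : ℝ) (hα : 0 < α) (hγ : 0 < γ) (hlam : 0 ≤ lam) (x m k : Fin d → ℝ)
    (hk : ∀ i, 0 ≤ k i * m i)
    (s : Fin d → ℝ) (hs : ∀ i, s i = if m i * x i ≤ 0 then (1 : ℝ) else 0) :
    (∑ i, (α * grad x i - lam * s i * m i) * (k i - lam * s i * x i))
        + (∑ i, (k i - lam * s i * x i) * (-(α * grad x i) - γ * m i))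
      = -(∑ i, (lam * s i + γ) * (k i * m i))
          - lam * (lam + γ) * (∑ i, max (-(m i * x i)) 0) ∧
    -(∑ i, (lam * s i + γ) * (k i * m i))
        - lam * (lam + γ) * (∑ i, max (-(m i * x i)) 0) ≤ 0 := by
  have key : ∀ i, (α * grad x i - lam * s i * m i) * (k i - lam * s i * x i)
        + (k i - lam * s i * x i) * (-(α * grad x i) - γ * m i)
      = -((lam * s i + γ) * (k i * m i)) - lam * (lam + γ) * max (-(m i * x i)) 0 := by
    intro i
    rcases le_or_gt (m i * x i) 0 with h | h
    · have hsi : s i = 1 := by rw [hs i]; simp [h]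
      have hmax : max (-(m i * x i)) 0 = -(m i * x i) := max_eq_left (by linarith)
      rw [hsi, hmax]; ring
    · have hsi : s i = 0 := by rw [hs i]; simp [not_le.mpr h]
      have hmax : max (-(m i * x i)) 0 = 0 := max_eq_right (by linarith)
      rw [hsi, hmax]; ring
  constructor
  · rw [← Finset.sum_add_distrib, Finset.sum_congr rfl fun i _ => key i,
      Finset.sum_sub_distrib, ← Finset.sum_neg_distrib, ← Finset.mul_sum]
  · have h1 : 0 ≤ ∑ i, (lam * s i + γ) * (k i * m i) := by
      apply Finset.sum_nonneg; intro i _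
      apply mul_nonneg _ (hk i)
      have hsi : 0 ≤ s i := by rw [hs i]; positivity
      nlinarith [hγ.le]
    have h2 : 0 ≤ ∑ i, max (-(m i * x i)) 0 :=
      Finset.sum_nonneg fun i _ => le_max_right _ _
    have h3 : 0 ≤ lam * (lam + γ) := by positivity
    nlinarith [mul_nonneg h3 h2]
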